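/- Let f : ℝ^d → ℝ be an α-strongly convex function (i.e., x ↦ f(x) − (α/2)‖x‖₂² is convex) that is also B-Lipschitz in the ℓ₂ norm, defined on a domain X containing the ℓ∞-ball of radius D centered at the origin. Then B/α ≥ D·√d / 4. -/

import Mathlib

open scoped RealInnerProductSpace

/-- If `f` is `α`-strongly convex (i.e. `x ↦ f x - (α/2)‖x‖²` is convex)
and `B`-Lipschitz in the ℓ₂ norm on a domain `X ⊆ ℝ^d` containing the ℓ∞-ball of radius `D`
centered at the origin, then `B/α ≥ D √d / 4`. -/
theorem strong_convexity_lipschitz_ratio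
    (d : ℕ) (hd : 0 < d) (D α B : ℝ) (hD : 0 < D) (hα : 0 < α) (hB : 0 < B)
    (X : Set (EuclideanSpace ℝ (Fin d)))
    (hball : {x : EuclideanSpace ℝ (Fin d) | ∀ i, |x i| ≤ D} ⊆ X)
    (f : EuclideanSpace ℝ (Fin d) → ℝ)
    (hsc : ConvexOn ℝ X (fun x => f x - α / 2 * ‖x‖ ^ 2))
    (hlip : ∀ x ∈ X, ∀ y ∈ X, |f x - f y| ≤ B * ‖x - y‖) :
    B / α ≥ D * Real.sqrt d / 4 := by
  set x : EuclideanSpace ℝ (Fin d) := WithLp.toLp 2 (fun _ => D) with hxdef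
  have hx : x ∈ X := hball (fun i => by simp [hxdef, abs_of_pos hD])
  have hnx : -x ∈ X := hball (fun i => by
    simp [hxdef, abs_of_pos hD, le_of_eq, abs_neg])
  have h0 : (0 : EuclideanSpace ℝ (Fin d)) ∈ X := hball (fun i => by
    simp [le_of_lt hD])
  have hnorm : ‖x‖ = D * Real.sqrt d := by
    rw [EuclideanSpace.norm_eq]
    simp only [hxdef, PiLp.toLp_apply]
    rw [Finset.sum_const, Finset.card_univ, Fintype.card_fin]
    rw [show d • ‖D‖ ^ 2 = D ^ 2 * (d:ℝ) by
      rw [nsmul_eq_mul, Real.norm_eq_abs, sq_abs]; ring]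
    rw [Real.sqrt_mul (sq_nonneg D), Real.sqrt_sq hD.le]
  have hnormpos : 0 < ‖x‖ := by
    rw [hnorm]
    positivity
  have hmid := hsc.2 hx hnx (by norm_num : (0:ℝ) ≤ 1/2) (by norm_num : (0:ℝ) ≤ 1/2)
    (by norm_num : (1:ℝ)/2 + 1/2 = 1)
  have hzero : (1/2 : ℝ) • x + (1/2 : ℝ) • (-x) = 0 := by
    simp
  rw [hzero] at hmid
  simp only [norm_zero, norm_neg, smul_eq_mul] at hmid
  have h1 := hlip x hx 0 h0
  have h2 := hlip (-x) hnx 0 h0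
  rw [sub_zero] at h1 h2
  rw [norm_neg] at h2
  have h1' : f x - f 0 ≤ B * ‖x‖ := (abs_le.mp h1).2
  have h2' : f (-x) - f 0 ≤ B * ‖x‖ := (abs_le.mp h2).2
  -- from hmid: f 0 - 0 ≤ (f x + f (-x))/2 - α/2 ‖x‖²
  have key : α / 2 * ‖x‖ ^ 2 ≤ B * ‖x‖ := by nlinarith [hmid]
  have key2 : α * ‖x‖ ≤ 2 * B := by
    have h := key
    nlinarith [hnormpos]
  rw [hnorm] at key2
  rw [ge_iff_le, div_le_div_iff₀ (by norm_num : (0:ℝ) < 4) hα]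
  nlinarith [key2, Real.sqrt_nonneg (d:ℝ), hD.le, hB.le]
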